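/- For every i with 2 ≤ i ≤ p, the element c_i = Σ_{j=0}^{i} C(p−j, i−j)·(−1)^j·a_j·a_1^{i−j}·p^j of ℤ[a_1,…,a_p] is invariant: η_R(c_i) = c_i in ℤ[a_1,…,a_p][r]. -/

import Mathlib

/-!
Fix a prime `p`.  `AZ p = ℤ[a_1,…,a_p]` (the variable `⟨i-1⟩ : Fin p` stands for `a_i`),
`Γ = (AZ p)[r]`, and `etaR` is the unique ring map with
`η_R(a_i) = ∑_{j=0}^{i} C(p-j, i-j) a_j r^{i-j}` (with `a_0 = 1`).
-/

/-- The polynomial ring `ℤ[a_1,…,a_p]`. -/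
abbrev AZ (p : ℕ) : Type := MvPolynomial (Fin p) ℤ

/-- `av p j` is the generator `a_j`, with the convention `a_0 = 1`. -/
noncomputable def av (p : ℕ) (j : ℕ) : AZ p :=
  if j = 0 then 1 else if h : 1 ≤ j ∧ j ≤ p then MvPolynomial.X ⟨j - 1, by omega⟩ else 0

/-- The right unit `η_R : ℤ[a_1,…,a_p] → ℤ[a_1,…,a_p][r]`, determined by
`η_R(a_i) = ∑_{j=0}^{i} C(p-j, i-j)·a_j·r^{i-j}` (here `a_{k+1}` is the variable `k : Fin p`). -/
noncomputable def etaR (p : ℕ) : AZ p →+* Polynomial (AZ p) :=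
  (MvPolynomial.aeval (R := ℤ) (fun k : Fin p =>
    ∑ j ∈ Finset.range (k.1 + 2),
      (Nat.choose (p - j) (k.1 + 1 - j) : Polynomial (AZ p)) *
        Polynomial.C (av p j) * Polynomial.X ^ (k.1 + 1 - j))).toRingHom

/-- The elements `c_i = ∑_{j=0}^{i} C(p-j,i-j)·(-1)^j·a_j·a_1^{i-j}·p^j`. -/
noncomputable def cgen (p i : ℕ) : AZ p :=
  ∑ j ∈ Finset.range (i + 1),
    (Nat.choose (p - j) (i - j) : AZ p) * (-1 : AZ p) ^ j * av p j *
      (av p 1) ^ (i - j) * (p : AZ p) ^ j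

lemma key_sum (p i k n : ℕ) (hkn : k ≤ n) (hni : n ≤ i) (hip : i ≤ p) :
    ∑ j ∈ Finset.Icc k n, (-1 : ℤ) ^ j * ((p - j).choose (i - j)) *
        ((p - k).choose (j - k)) * ((i - j).choose (n - j))
      = if n = k then (-1 : ℤ) ^ k * ((p - k).choose (i - k)) else 0 := by
  have h1 : ∀ j ∈ Finset.Icc k n,
      (-1 : ℤ) ^ j * ((p - j).choose (i - j)) * ((p - k).choose (j - k)) *
          ((i - j).choose (n - j))
        = ((p - n).choose (i - n) : ℤ) *
            ((-1 : ℤ) ^ j * ((p - k).choose (j - k)) * ((p - j).choose (n - j))) := by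
    intro j hj
    simp only [Finset.mem_Icc] at hj
    have hnat : (p - j).choose (i - j) * (i - j).choose (n - j)
        = (p - j).choose (n - j) * (p - n).choose (i - n) := by
      have h := Nat.choose_mul (n := p - j) (k := i - j) (s := n - j)
        (by omega)
      have e1 : p - j - (n - j) = p - n := by omega
      have e2 : i - j - (n - j) = i - n := by omega
      rw [h, e1, e2]
    have hc : ((p - j).choose (i - j) : ℤ) * ((i - j).choose (n - j))
        = ((p - j).choose (n - j) : ℤ) * ((p - n).choose (i - n)) := by
      exact_mod_cast congrArg (Nat.cast : ℕ → ℤ) hnat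
    linear_combination ((-1 : ℤ) ^ j * ((p - k).choose (j - k))) * hc
  rw [Finset.sum_congr rfl h1, ← Finset.mul_sum]
  have h2 : ∑ j ∈ Finset.Icc k n,
      ((-1 : ℤ) ^ j * ((p - k).choose (j - k)) * ((p - j).choose (n - j)))
      = (-1 : ℤ) ^ k * ((p - k).choose (n - k)) *
          ∑ s ∈ Finset.range (n - k + 1), (-1 : ℤ) ^ s * ((n - k).choose s) := by
    rw [Finset.mul_sum]
    have hIcc : Finset.Icc k n = Finset.Ico k (n + 1) := by
      rw [Finset.Ico_add_one_right_eq_Icc]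
    rw [hIcc, Finset.sum_Ico_eq_sum_range]
    have hr : n + 1 - k = n - k + 1 := by omega
    rw [hr]
    apply Finset.sum_congr rfl
    intro s hs
    simp only [Finset.mem_range] at hs
    have hnat : (p - k).choose s * (p - (k + s)).choose (n - (k + s))
        = (p - k).choose (n - k) * (n - k).choose s := by
      have h := Nat.choose_mul (n := p - k) (k := n - k) (s := s) (by omega)
      have e1 : p - k - s = p - (k + s) := by omega
      have e2 : n - k - s = n - (k + s) := by omega
      rw [h, e1, e2]
    have hc : ((p - k).choose s : ℤ) * ((p - (k + s)).choose (n - (k + s)))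
        = ((p - k).choose (n - k) : ℤ) * ((n - k).choose s) := by
      exact_mod_cast congrArg (Nat.cast : ℕ → ℤ) hnat
    have he : k + s - k = s := by omega
    rw [he, pow_add]
    linear_combination ((-1 : ℤ) ^ k * (-1 : ℤ) ^ s) * hc
  rw [h2, Int.alternating_sum_range_choose]
  by_cases h : n = k
  · subst h
    simp [mul_comm]
  · rw [if_neg (by omega), if_neg h]
    ring

lemma av_zero (p : ℕ) : av p 0 = 1 := by rw [av, if_pos rfl]

lemma etaR_av' (p : ℕ) (j : ℕ) (hjp : j ≤ p) :
    etaR p (av p j) = ∑ m ∈ Finset.range (j + 1),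
      (Nat.choose (p - m) (j - m) : Polynomial (AZ p)) *
        Polynomial.C (av p m) * Polynomial.X ^ (j - m) := by
  rcases Nat.eq_zero_or_pos j with hj | hj
  · subst hj
    simp [av_zero, map_one]
  · have hav : av p j = MvPolynomial.X ⟨j - 1, by omega⟩ := by
      rw [av, if_neg (by omega), dif_pos ⟨hj, hjp⟩]
    rw [hav]
    show (MvPolynomial.aeval _) (MvPolynomial.X _) = _
    rw [MvPolynomial.aeval_X]
    have hv : (⟨j - 1, by omega⟩ : Fin p).1 = j - 1 := rfl
    simp only [hv]
    have h1 : j - 1 + 2 = j + 1 := by omega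
    have h2 : j - 1 + 1 = j := by omega
    rw [h1]
    exact Finset.sum_congr rfl fun m _ => by rw [h2]

lemma etaR_av_one (p : ℕ) (hp : 1 ≤ p) :
    etaR p (av p 1) = (p : Polynomial (AZ p)) * Polynomial.X + Polynomial.C (av p 1) := by
  rw [etaR_av' p 1 hp, Finset.sum_range_succ, Finset.sum_range_one]
  simp [av_zero, Nat.choose_one_right]

/-- The padded summand in the triple-sum expansion of `η_R(c_i)`. -/
noncomputable def Gterm (p i j k n : ℕ) : Polynomial (AZ p) :=
  if k ≤ j ∧ j ≤ n then
    (((-1 : ℤ) ^ j * ((p - j).choose (i - j)) * ((p - k).choose (j - k)) *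
        ((i - j).choose (n - j)) : ℤ) : Polynomial (AZ p)) *
      Polynomial.C (av p k) * Polynomial.C (av p 1) ^ (i - n) *
        (p : Polynomial (AZ p)) ^ n * Polynomial.X ^ (n - k)
  else 0

/-- For every `2 ≤ i ≤ p` the element `c_i ∈ ℤ[a_1,…,a_p]` is invariant: `η_R(c_i) = c_i`. -/
theorem cgen_invariant (p : ℕ) (hp : p.Prime) :
    ∀ i : ℕ, 2 ≤ i → i ≤ p → etaR p (cgen p i) = Polynomial.C (cgen p i) := by
  intro i h2 hip
  have hp1 : 1 ≤ p := by omega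
  rw [cgen, map_sum]
  have hsummand : ∀ j ∈ Finset.range (i + 1),
      etaR p ((Nat.choose (p - j) (i - j) : AZ p) * (-1 : AZ p) ^ j * av p j *
          (av p 1) ^ (i - j) * (p : AZ p) ^ j)
        = ∑ k ∈ Finset.range (i + 1), ∑ n ∈ Finset.range (i + 1), Gterm p i j k n := by
    intro j hj
    simp only [Finset.mem_range] at hj
    have hji : j ≤ i := by omega
    have hzero : ∀ k, j < k → ∀ n, Gterm p i j k n = 0 := by
      intro k hk n
      rw [Gterm, if_neg (by omega)]
    have hstep : (∑ k ∈ Finset.range (i + 1), ∑ n ∈ Finset.range (i + 1), Gterm p i j k n)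
        = ∑ k ∈ Finset.range (j + 1), ∑ n ∈ Finset.range (i + 1), Gterm p i j k n := by
      symm
      apply Finset.sum_subset
      · intro x hx
        simp only [Finset.mem_range] at *
        omega
      · intro k hk hk2
        simp only [Finset.mem_range] at hk hk2
        exact Finset.sum_eq_zero fun n _ => hzero k (by omega) n
    have hinner : ∀ m ∈ Finset.range (j + 1),
        (∑ n ∈ Finset.range (i + 1), Gterm p i j m n)
          = ∑ u ∈ Finset.range (i - j + 1), Gterm p i j m (j + u) := by
      intro m hm
      have hIco : (∑ n ∈ Finset.Ico j (i + 1), Gterm p i j m n)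
          = ∑ u ∈ Finset.range (i + 1 - j), Gterm p i j m (j + u) :=
        Finset.sum_Ico_eq_sum_range _ _ _
      have hrestr : (∑ n ∈ Finset.range (i + 1), Gterm p i j m n)
          = ∑ n ∈ Finset.Ico j (i + 1), Gterm p i j m n := by
        symm
        apply Finset.sum_subset
        · intro x hx
          simp only [Finset.mem_Ico, Finset.mem_range] at *
          omega
        · intro n hn hn2
          simp only [Finset.mem_range, Finset.mem_Ico] at hn hn2
          rw [Gterm, if_neg (by omega)]
      rw [hrestr, hIco, show i + 1 - j = i - j + 1 by omega]
    rw [hstep, Finset.sum_congr rfl hinner]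
    rw [map_mul, map_mul, map_mul, map_mul, map_pow, map_pow, map_pow, map_neg, map_one,
      map_natCast, map_natCast, etaR_av' p j (by omega), etaR_av_one p hp1, add_pow]
    simp only [Finset.mul_sum, Finset.sum_mul]
    rw [Finset.sum_comm]
    apply Finset.sum_congr rfl
    intro m hm
    apply Finset.sum_congr rfl
    intro u hu
    simp only [Finset.mem_range] at hm hu
    rw [Gterm, if_pos ⟨by omega, by omega⟩]
    have e1 : j + u - j = u := by omega
    have e2 : i - (j + u) = i - j - u := by omega
    have e3 : j + u - m = (j - m) + u := by omega
    rw [e1, e2, e3, pow_add, pow_add]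
    push_cast
    ring
  rw [Finset.sum_congr rfl hsummand]
  rw [Finset.sum_comm]
  have hswap : ∀ k ∈ Finset.range (i + 1),
      (∑ j ∈ Finset.range (i + 1), ∑ n ∈ Finset.range (i + 1), Gterm p i j k n)
        = ∑ n ∈ Finset.range (i + 1), ∑ j ∈ Finset.range (i + 1), Gterm p i j k n :=
    fun k _ => Finset.sum_comm
  rw [Finset.sum_congr rfl hswap]
  have hkey : ∀ k ∈ Finset.range (i + 1), ∀ n ∈ Finset.range (i + 1),
      (∑ j ∈ Finset.range (i + 1), Gterm p i j k n)
        = if n = k then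
            (((-1 : ℤ) ^ k * ((p - k).choose (i - k)) : ℤ) : Polynomial (AZ p)) *
              Polynomial.C (av p k) * Polynomial.C (av p 1) ^ (i - k) *
                (p : Polynomial (AZ p)) ^ k
          else 0 := by
    intro k hk n hn
    simp only [Finset.mem_range] at hk hn
    have hfac : ∀ j, Gterm p i j k n
        = (((if k ≤ j ∧ j ≤ n then
              ((-1 : ℤ) ^ j * ((p - j).choose (i - j)) * ((p - k).choose (j - k)) *
                ((i - j).choose (n - j)) : ℤ)
            else 0) : ℤ) : Polynomial (AZ p)) *
          (Polynomial.C (av p k) * Polynomial.C (av p 1) ^ (i - n) *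
            (p : Polynomial (AZ p)) ^ n * Polynomial.X ^ (n - k)) := by
      intro j
      rw [Gterm]
      by_cases h : k ≤ j ∧ j ≤ n
      · rw [if_pos h, if_pos h]
        ring
      · rw [if_neg h, if_neg h]
        simp
    simp only [hfac]
    rw [← Finset.sum_mul, ← Int.cast_sum]
    have hsum : (∑ j ∈ Finset.range (i + 1),
        (if k ≤ j ∧ j ≤ n then
          ((-1 : ℤ) ^ j * ((p - j).choose (i - j)) * ((p - k).choose (j - k)) *
            ((i - j).choose (n - j)) : ℤ)
        else 0))
        = if n = k then (-1 : ℤ) ^ k * ((p - k).choose (i - k)) else 0 := by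
      by_cases hkn : k ≤ n
      · rw [Finset.sum_ite, Finset.sum_const_zero, add_zero]
        have hfilter : Finset.filter (fun j => k ≤ j ∧ j ≤ n) (Finset.range (i + 1))
            = Finset.Icc k n := by
          ext x
          simp only [Finset.mem_filter, Finset.mem_range, Finset.mem_Icc]
          omega
        rw [hfilter]
        exact key_sum p i k n hkn (by omega) hip
      · rw [if_neg (by omega)]
        apply Finset.sum_eq_zero
        intro j _
        rw [if_neg (by omega)]
    rw [hsum]
    by_cases h : n = k
    · subst h
      rw [if_pos rfl, if_pos rfl]
      rw [Nat.sub_self, pow_zero]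
      ring
    · rw [if_neg h, if_neg h, Int.cast_zero, zero_mul]
  rw [Finset.sum_congr rfl (fun k hk => Finset.sum_congr rfl (hkey k hk))]
  have hdiag : ∀ k ∈ Finset.range (i + 1),
      (∑ n ∈ Finset.range (i + 1),
        if n = k then
          (((-1 : ℤ) ^ k * ((p - k).choose (i - k)) : ℤ) : Polynomial (AZ p)) *
            Polynomial.C (av p k) * Polynomial.C (av p 1) ^ (i - k) *
              (p : Polynomial (AZ p)) ^ k
        else 0)
        = (((-1 : ℤ) ^ k * ((p - k).choose (i - k)) : ℤ) : Polynomial (AZ p)) *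
            Polynomial.C (av p k) * Polynomial.C (av p 1) ^ (i - k) *
              (p : Polynomial (AZ p)) ^ k := by
    intro k hk
    rw [Finset.sum_ite_eq' (Finset.range (i + 1)) k, if_pos hk]
  rw [Finset.sum_congr rfl hdiag]
  simp only [cgen, map_sum]
  apply Finset.sum_congr rfl
  intro k hk
  rw [map_mul, map_mul, map_mul, map_mul, map_pow, map_pow, map_pow, map_neg, map_one,
    map_natCast, map_natCast]
  push_cast
  ring
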